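/- Let F be an algebraically closed field of prime characteristic p, V a finite-dimensional F-vector space, and u a semisimple F-linear endomorphism of V. Let r = ord(u) be the p-order of u, so that Λ(u) is a finite set of cardinality p^r, and let f_u(t) = ∏_{λ ∈ Λ(u)} (t − λ). Then: (i) f_u(u) = 0; (ii) f_u is a p-polynomial of degree p^r, and every nonzero p-polynomial g with g(u) = 0 has degree at least p^r (f_u is the minimal p-polynomial of u); (iii) the F-linear span of the set {u^{p^j} : j ≥ 0} inside End_F(V) has dimension r over F. -/

import Mathlib

attribute [local instance] ZMod.algebra

/-- `Λ(u)`: the `𝔽_p`-subspace of `F` spanned by the eigenvalues of `u`. -/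
noncomputable def pLambda (p : ℕ) {F : Type} [Field F] [CharP F p]
    {V : Type} [AddCommGroup V] [Module F V] (u : Module.End F V) :
    Submodule (ZMod p) F :=
  Submodule.span (ZMod p) {μ : F | Module.End.HasEigenvalue u μ}

/-- The `p`-order of `u`: the dimension of `Λ(u)` over the prime field `𝔽_p`. -/
noncomputable def pOrd (p : ℕ) {F : Type} [Field F] [CharP F p]
    {V : Type} [AddCommGroup V] [Module F V] (u : Module.End F V) : ℕ :=
  Module.finrank (ZMod p) (pLambda p u)

/-- A `p`-polynomial: a polynomial of the form `a_0 t + a_1 t^p + ⋯ + a_k t^(p^k)`. -/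
def IsPPoly (p : ℕ) {F : Type} [Field F] (f : Polynomial F) : Prop :=
  ∃ (k : ℕ) (a : ℕ → F),
    f = ∑ j ∈ Finset.range (k + 1), Polynomial.C (a j) * Polynomial.X ^ p ^ j

open Polynomial

section Aux

variable {p : ℕ} [hpf : Fact p.Prime] {F : Type} [Field F] [CharP F p]

lemma aux_cast_pow_pow (j : ZMod p) (i : ℕ) :
    (algebraMap (ZMod p) F j) ^ p ^ i = algebraMap (ZMod p) F j := by
  rw [← map_pow, ZMod.pow_card_pow]

lemma aux_smul_pow_pow (j : ZMod p) (x : F) (i : ℕ) :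
    (j • x) ^ p ^ i = j • x ^ p ^ i := by
  rw [Algebra.smul_def, mul_pow, aux_cast_pow_pow, Algebra.smul_def]

lemma aux_ppoly_eval (a : ℕ → F) (m : ℕ) (x : F) :
    (∑ j ∈ Finset.range m, C (a j) * X ^ p ^ j).eval x
      = ∑ j ∈ Finset.range m, a j * x ^ p ^ j := by
  rw [eval_finset_sum]
  simp

lemma aux_ppoly_eval_smul (a : ℕ → F) (m : ℕ) (j : ZMod p) (x : F) :
    (∑ i ∈ Finset.range m, C (a i) * X ^ p ^ i).eval (j • x)
      = j • (∑ i ∈ Finset.range m, C (a i) * X ^ p ^ i).eval x := by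
  rw [aux_ppoly_eval, aux_ppoly_eval, Finset.smul_sum]
  refine Finset.sum_congr rfl fun i _ => ?_
  rw [aux_smul_pow_pow, mul_smul_comm]

lemma aux_ppoly_comp_sub (a : ℕ → F) (m : ℕ) (t : F) :
    (∑ j ∈ Finset.range m, C (a j) * X ^ p ^ j).comp (X - C t)
      = (∑ j ∈ Finset.range m, C (a j) * X ^ p ^ j)
        - C ((∑ j ∈ Finset.range m, C (a j) * X ^ p ^ j).eval t) := by
  rw [aux_ppoly_eval, Polynomial.sum_comp, map_sum, ← Finset.sum_sub_distrib]
  refine Finset.sum_congr rfl fun j _ => ?_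
  rw [mul_comp, C_comp, X_pow_comp, sub_pow_char_pow, ← C_pow, mul_sub, ← C_mul]


lemma aux_prod_smul_eq (β : F) (hβ : β ≠ 0) :
    ∏ j : ZMod p, (X - C (j • β)) = X ^ p - C (β ^ (p - 1)) * X := by
  classical
  have hp2 : 2 ≤ p := hpf.out.two_le
  set g : F[X] := X ^ p - C (β ^ (p - 1)) * X with hg
  have hdeglt : (C (β ^ (p - 1)) * X).degree < (X ^ p : F[X]).degree := by
    rw [degree_X_pow]
    calc (C (β ^ (p - 1)) * X).degree ≤ 1 := by
          refine (degree_mul_le _ _).trans ?_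
          calc (C (β ^ (p-1))).degree + (X : F[X]).degree ≤ 0 + 1 :=
                add_le_add degree_C_le (le_of_eq degree_X)
            _ = 1 := by norm_num
      _ < (p : WithBot ℕ) := by exact_mod_cast Nat.lt_of_lt_of_le one_lt_two hp2
  have hmonic : g.Monic := by
    rw [hg]
    exact (monic_X_pow p).sub_of_left hdeglt
  have hgdeg : g.natDegree = p := by
    rw [hg]
    rw [natDegree_sub_eq_left_of_natDegree_lt]
    · exact natDegree_X_pow p
    · have h1 : (C (β ^ (p - 1)) * X).natDegree ≤ 1 := by
        simpa using natDegree_C_mul_le (β ^ (p-1)) X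
      have : (X ^ p : F[X]).natDegree = p := natDegree_X_pow p
      omega
  have hroot : ∀ j : ZMod p, g.IsRoot (j • β) := by
    intro j
    have hpow : (j • β) ^ p = j • β ^ p := by
      have := aux_smul_pow_pow j β 1
      simpa using this
    have hb : β ^ (p - 1) * β = β ^ p := by
      rw [← pow_succ]
      congr 1
      omega
    simp only [IsRoot, hg, eval_sub, eval_pow, eval_X, eval_mul, eval_C, hpow]
    rw [mul_smul_comm, hb, sub_self]
  have hinj : Function.Injective fun j : ZMod p => j • β := by
    intro a b hab
    have h0 : (a - b) • β = 0 := by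
      simp only at hab
      rw [sub_smul, hab, sub_self]
    rw [Algebra.smul_def, mul_eq_zero] at h0
    rcases h0 with h0 | h0
    · have := (algebraMap (ZMod p) F).injective
      have := this (by simpa using h0 : algebraMap (ZMod p) F (a - b) = algebraMap (ZMod p) F 0)
      exact sub_eq_zero.mp this
    · exact absurd h0 hβ
  set T : Finset F := Finset.image (fun j : ZMod p => j • β) Finset.univ with hT
  have hcard : T.card = p := by
    rw [hT, Finset.card_image_of_injective _ hinj, Finset.card_univ, ZMod.card]
  have hle : T.val ≤ g.roots := by
    rw [Multiset.le_iff_subset T.nodup]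
    intro x hx
    obtain ⟨j, _, hj⟩ := Finset.mem_image.mp hx
    rw [mem_roots hmonic.ne_zero]
    exact hj ▸ hroot j
  have hdvd : ∏ c ∈ T, (X - C c) ∣ g := by
    have h1 : ∏ c ∈ T, (X - C c) = (T.val.map fun c => X - C c).prod := rfl
    rw [h1]
    exact (Multiset.prod_dvd_prod_of_le (Multiset.map_le_map hle)).trans
      (prod_multiset_X_sub_C_dvd g)
  have hTmonic : (∏ c ∈ T, (X - C c)).Monic :=
    monic_prod_of_monic _ _ fun c _ => monic_X_sub_C c
  have hTdeg : (∏ c ∈ T, (X - C c)).natDegree = p := by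
    rw [natDegree_prod _ _ fun c _ => X_sub_C_ne_zero c]
    simp [hcard]
  have heq : g = ∏ c ∈ T, (X - C c) := by
    obtain ⟨q, hq⟩ := hdvd
    have hq0 : q ≠ 0 := by
      intro h; rw [h, mul_zero] at hq; exact hmonic.ne_zero hq
    have hdeg : q.natDegree = 0 := by
      have := hq ▸ natDegree_mul (hTmonic.ne_zero) hq0
      omega
    have hlc : q.leadingCoeff = 1 := by
      have := hq ▸ hmonic
      have h2 := Monic.of_mul_monic_left hTmonic this
      exact h2
    have hq1 : q = 1 := by
      rw [eq_C_of_natDegree_eq_zero hdeg, ← C_1]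
      congr 1
      rw [← hlc]
      simp [Polynomial.leadingCoeff, hdeg]
    rw [hq, hq1, mul_one]
  calc ∏ j : ZMod p, (X - C (j • β)) = ∏ c ∈ T, (X - C c) := by
        rw [hT, Finset.prod_image (fun a _ b _ h => hinj h)]
    _ = g := heq.symm


lemma aux_core (n : ℕ) (e : Fin n → F) (he : LinearIndependent (ZMod p) e) :
    ∃ a : ℕ → F, a n = 1 ∧ (∀ j, n < j → a j = 0) ∧
      ∏ c : Fin n → ZMod p, (X - C (∑ i, c i • e i)) =
        ∑ j ∈ Finset.range (n + 1), C (a j) * X ^ p ^ j := by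
  induction n with
  | zero =>
    refine ⟨fun j => if j = 0 then 1 else 0, by simp,
      fun j hj => by simp [Nat.pos_iff_ne_zero.mp hj], ?_⟩
    simp
  | succ n ih =>
    have he' : LinearIndependent (ZMod p) (e ∘ Fin.succ) := he.comp _ (Fin.succ_injective n)
    obtain ⟨a, han, hagt, hQ⟩ := ih (e ∘ Fin.succ) he'
    set Q : F[X] := ∑ j ∈ Finset.range (n + 1), C (a j) * X ^ p ^ j with hQdef
    set β : F := Q.eval (e 0) with hβdef
    have hβ : β ≠ 0 := by
      rw [hβdef, ← hQ, eval_prod]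
      refine Finset.prod_ne_zero_iff.mpr fun c _ => ?_
      simp only [eval_sub, eval_X, eval_C]
      rw [sub_ne_zero]
      intro hcon
      have h0 : ∑ i : Fin (n+1), (Fin.cons (-1 : ZMod p) c : Fin (n+1) → ZMod p) i • e i = 0 := by
        rw [Fin.sum_univ_succ]
        simp only [Fin.cons_zero, Fin.cons_succ]
        simp only [Function.comp_apply] at hcon
        rw [neg_smul, one_smul, ← hcon, neg_add_cancel]
      have hz := Fintype.linearIndependent_iff.mp he _ h0 0
      rw [Fin.cons_zero, neg_eq_zero] at hz
      exact one_ne_zero hz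
    have key : ∏ c : Fin (n+1) → ZMod p, (X - C (∑ i, c i • e i))
        = Q ^ p - C (β ^ (p - 1)) * Q := by
      calc ∏ c : Fin (n+1) → ZMod p, (X - C (∑ i, c i • e i))
          = ∏ x : ZMod p × (Fin n → ZMod p),
              (X - C (∑ i, (Fin.consEquiv (fun _ => ZMod p)) x i • e i)) :=
            (Equiv.prod_comp (Fin.consEquiv fun _ => ZMod p)
              fun c => (X - C (∑ i, c i • e i))).symm
        _ = ∏ j : ZMod p, ∏ c : Fin n → ZMod p,
              (X - C (j • e 0 + ∑ i : Fin n, c i • (e ∘ Fin.succ) i)) := by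
            rw [Fintype.prod_prod_type]
            refine Finset.prod_congr rfl fun j _ => Finset.prod_congr rfl fun c _ => ?_
            congr 2
            rw [Fin.sum_univ_succ]
            simp [Fin.consEquiv, Function.comp]
        _ = ∏ j : ZMod p, Q.comp (X - C (j • e 0)) := by
            refine Finset.prod_congr rfl fun j _ => ?_
            rw [← hQ, Polynomial.prod_comp]
            refine Finset.prod_congr rfl fun c _ => ?_
            rw [sub_comp, X_comp, C_comp, sub_sub, ← C_add]
        _ = ∏ j : ZMod p, (Q - C (j • β)) := by
            refine Finset.prod_congr rfl fun j _ => ?_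
            rw [hQdef, aux_ppoly_comp_sub, aux_ppoly_eval_smul, ← hQdef, ← hβdef]
        _ = (∏ j : ZMod p, (X - C (j • β))).comp Q := by
            rw [Polynomial.prod_comp]
            refine Finset.prod_congr rfl fun j _ => ?_
            rw [sub_comp, X_comp, C_comp]
        _ = Q ^ p - C (β ^ (p - 1)) * Q := by
            rw [aux_prod_smul_eq β hβ, sub_comp, pow_comp, X_comp, mul_comp, C_comp, X_comp]
    refine ⟨fun j => (if j = 0 then 0 else (a (j-1))^p) - β^(p-1) * a j, ?_, ?_, ?_⟩
    · simp [han, hagt (n+1) (Nat.lt_succ_self n)]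
    · intro j hj
      have hj0 : j ≠ 0 := by omega
      simp [hj0, hagt (j-1) (by omega), hagt j (by omega), zero_pow hpf.out.ne_zero]
    · rw [key]
      have hQp : Q ^ p = ∑ j ∈ Finset.range (n + 1), C ((a j) ^ p) * X ^ p ^ (j+1) := by
        rw [hQdef, sum_pow_char]
        refine Finset.sum_congr rfl fun j _ => ?_
        rw [mul_pow, ← C_pow, ← pow_mul, ← pow_succ]
      have hCQ : C (β^(p-1)) * Q
          = ∑ j ∈ Finset.range (n + 1 + 1), C (β^(p-1) * a j) * X ^ p ^ j := by
        rw [Finset.sum_range_succ, hagt (n+1) (Nat.lt_succ_self n), mul_zero, map_zero,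
          zero_mul, add_zero, hQdef, Finset.mul_sum]
        refine Finset.sum_congr rfl fun j _ => ?_
        rw [← mul_assoc, ← C_mul]
      have h1 : ∑ j ∈ Finset.range (n + 1 + 1),
            C (if j = 0 then (0:F) else (a (j-1))^p) * X ^ p ^ j
          = ∑ j ∈ Finset.range (n + 1), C ((a j) ^ p) * X ^ p ^ (j+1) := by
        rw [Finset.sum_range_succ'
          (fun j => C (if j = 0 then (0:F) else (a (j-1))^p) * X ^ p ^ j) (n+1)]
        simp
      calc Q ^ p - C (β^(p-1)) * Q
          = (∑ j ∈ Finset.range (n + 1 + 1),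
              C (if j = 0 then (0:F) else (a (j-1))^p) * X ^ p ^ j)
            - ∑ j ∈ Finset.range (n + 1 + 1), C (β^(p-1) * a j) * X ^ p ^ j := by
            rw [hQp, hCQ, h1]
        _ = ∑ j ∈ Finset.range (n + 1 + 1),
              C ((if j = 0 then (0:F) else (a (j-1))^p) - β^(p-1) * a j) * X ^ p ^ j := by
            rw [← Finset.sum_sub_distrib]
            refine Finset.sum_congr rfl fun j _ => ?_
            rw [map_sub, sub_mul]

end Aux

open Polynomial in
theorem semisimple_minimal_pPolynomial
    (p : ℕ) (hp : p.Prime) (F : Type) [Field F] [IsAlgClosed F] [CharP F p]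
    (V : Type) [AddCommGroup V] [Module F V] [FiniteDimensional F V]
    (u : Module.End F V) (hu : u.IsSemisimple)
    (S : Finset F) (hS : (S : Set F) = (pLambda p u : Set F))
    (f : Polynomial F) (hf : f = ∏ c ∈ S, (Polynomial.X - Polynomial.C c)) :
    Polynomial.aeval u f = 0 ∧
      (IsPPoly p f ∧ f.natDegree = p ^ pOrd p u ∧
        ∀ g : Polynomial F, IsPPoly p g → g ≠ 0 → Polynomial.aeval u g = 0 →
          p ^ pOrd p u ≤ g.natDegree) ∧
      Module.finrank F (Submodule.span F (Set.range fun j : ℕ => u ^ p ^ j)) = pOrd p u := by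
  classical
  haveI : Fact p.Prime := ⟨hp⟩
  set W : Submodule (ZMod p) F := pLambda p u with hW
  have hWfin : (W : Set F).Finite := hS ▸ S.finite_toSet
  haveI : Finite ↥W := hWfin.to_subtype
  haveI : Module.Finite (ZMod p) ↥W := inferInstance
  set r : ℕ := pOrd p u with hrdef
  have hrW : r = Module.finrank (ZMod p) ↥W := rfl
  let b : Module.Basis (Fin r) (ZMod p) ↥W := Module.finBasisOfFinrankEq (ZMod p) ↥W hrW.symm
  set e : Fin r → F := fun i => ((b i : ↥W) : F) with he_def
  have he : LinearIndependent (ZMod p) e := by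
    have h1 := b.linearIndependent
    exact h1.map' W.subtype W.ker_subtype
  have hspan : Submodule.span (ZMod p) (Set.range e) = W := by
    have h1 : Set.range e = W.subtype '' Set.range b := by
      rw [← Set.range_comp]; rfl
    rw [h1, ← Submodule.map_span, b.span_eq, Submodule.map_top, Submodule.range_subtype]
  set φ : (Fin r → ZMod p) → F := fun c => ∑ i, c i • e i with hφdef
  have hφinj : Function.Injective φ := by
    intro c c' hcc
    have h0 : ∑ i, (c i - c' i) • e i = 0 := by
      simp only [sub_smul, Finset.sum_sub_distrib]
      rw [hφdef] at hcc
      simp only at hcc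
      rw [hcc, sub_self]
    have hall := Fintype.linearIndependent_iff.mp he _ h0
    funext i
    exact sub_eq_zero.mp (hall i)
  have hSim : S = Finset.image φ Finset.univ := by
    apply Finset.coe_injective
    rw [Finset.coe_image, Finset.coe_univ, Set.image_univ, hS, ← hspan]
    ext x
    rw [SetLike.mem_coe, Submodule.mem_span_range_iff_exists_fun]
    exact ⟨fun ⟨c, hc⟩ => ⟨c, hc⟩, fun ⟨c, hc⟩ => ⟨c, hc⟩⟩
  obtain ⟨a, har, hagt, hcore⟩ := aux_core r e he
  have hfa : f = ∑ j ∈ Finset.range (r + 1), C (a j) * X ^ p ^ j := by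
    rw [hf, hSim, Finset.prod_image fun a _ b _ h => hφinj h]
    exact hcore
  -- Part 1 : aeval u f = 0
  have hmin : minpoly F u ∣ f := by
    have hmonic : (minpoly F u).Monic := minpoly.monic (Algebra.IsIntegral.isIntegral u)
    have hsplits : (minpoly F u).Splits := IsAlgClosed.splits _
    have hsq : Squarefree (minpoly F u) := hu.minpoly_squarefree
    have hsep : (minpoly F u).Separable := PerfectField.separable_iff_squarefree.mpr hsq
    have hnodup : (minpoly F u).roots.Nodup := nodup_roots hsep
    have heq := hsplits.eq_prod_roots_of_monic hmonic
    have hsub : (minpoly F u).roots.toFinset ⊆ S := by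
      intro c hc
      rw [Multiset.mem_toFinset, mem_roots hmonic.ne_zero] at hc
      have hev : Module.End.HasEigenvalue u c := Module.End.hasEigenvalue_iff_isRoot.mpr hc
      have hcW : c ∈ (W : Set F) := Submodule.subset_span hev
      rw [← hS] at hcW
      exact hcW
    have hval : (minpoly F u).roots.toFinset.val = (minpoly F u).roots := by
      rw [Multiset.toFinset_val, Multiset.dedup_eq_self.mpr hnodup]
    have hmf : minpoly F u = ∏ c ∈ (minpoly F u).roots.toFinset, (X - C c) := by
      conv_lhs => rw [heq]
      rw [Finset.prod_eq_multiset_prod, hval]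
    have hdv := Finset.prod_dvd_prod_of_subset _ S (fun c => X - C c) hsub
    rw [hf, hmf]
    exact hdv
  have h1 : Polynomial.aeval u f = 0 := by
    obtain ⟨q, hq⟩ := hmin
    rw [hq, map_mul, minpoly.aeval, zero_mul]
  -- Part 3 : natDegree
  have hScard : S.card = p ^ r := by
    rw [hSim, Finset.card_image_of_injective _ hφinj, Finset.card_univ]
    simp [ZMod.card]
  have h3 : f.natDegree = p ^ r := by
    rw [hf, natDegree_prod _ _ fun c _ => X_sub_C_ne_zero c]
    simp [hScard]
  -- Part 4 : minimality
  have hmini : ∀ g : Polynomial F, IsPPoly p g → g ≠ 0 → Polynomial.aeval u g = 0 →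
      p ^ r ≤ g.natDegree := by
    intro g hgpp hg0 hgu
    obtain ⟨k, ga, hgform⟩ := hgpp
    have hdvd : minpoly F u ∣ g := minpoly.dvd F u hgu
    have hKadd : ∀ x y : F, g.eval x = 0 → g.eval y = 0 → g.eval (x + y) = 0 := by
      intro x y hx hy
      rw [hgform, aux_ppoly_eval] at hx hy ⊢
      have : ∀ j ∈ Finset.range (k+1), ga j * (x + y) ^ p ^ j
          = ga j * x ^ p ^ j + ga j * y ^ p ^ j := by
        intro j _
        rw [add_pow_char_pow, mul_add]
      rw [Finset.sum_congr rfl this, Finset.sum_add_distrib, hx, hy, add_zero]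
    have hKzero : g.eval 0 = 0 := by
      rw [hgform, aux_ppoly_eval]
      refine Finset.sum_eq_zero fun j _ => ?_
      rw [zero_pow (pow_ne_zero j hp.ne_zero), mul_zero]
    have hKsmul : ∀ (j : ZMod p) (x : F), g.eval x = 0 → g.eval (j • x) = 0 := by
      intro j x hx
      rw [hgform] at hx ⊢
      rw [aux_ppoly_eval_smul, hx, smul_zero]
    let K : Submodule (ZMod p) F :=
      { carrier := {x : F | g.eval x = 0}
        add_mem' := fun hx hy => hKadd _ _ hx hy
        zero_mem' := hKzero
        smul_mem' := fun j x hx => hKsmul j x hx }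
    have hWK : W ≤ K := by
      rw [hW]
      refine Submodule.span_le.mpr fun μ hμ => ?_
      have hroot : (minpoly F u).IsRoot μ := Module.End.hasEigenvalue_iff_isRoot.mp hμ
      exact hroot.dvd hdvd
    have hSroots : S.val ≤ g.roots := by
      rw [Multiset.le_iff_subset S.nodup]
      intro x hx
      have hxW : x ∈ (W : Set F) := by rw [← hS]; exact hx
      rw [mem_roots hg0]
      exact hWK hxW
    calc p ^ r = S.card := hScard.symm
      _ ≤ Multiset.card g.roots := Multiset.card_le_card hSroots
      _ ≤ g.natDegree := card_roots' g
  -- Part 5 : span dimension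
  set v : Fin r → Module.End F V := fun j => u ^ p ^ (j : ℕ) with hv
  set T : Submodule F (Module.End F V) := Submodule.span F (Set.range v) with hT
  have hrel : ∑ j ∈ Finset.range (r + 1), a j • u ^ p ^ j = 0 := by
    have h2 := h1
    rw [hfa, map_sum] at h2
    rw [← h2]
    refine Finset.sum_congr rfl fun j _ => ?_
    rw [map_mul, aeval_C, map_pow, aeval_X, Algebra.smul_def]
  have hur : u ^ p ^ r ∈ T := by
    have h2 : u ^ p ^ r = - ∑ j ∈ Finset.range r, a j • u ^ p ^ j := by
      have h3 := hrel
      rw [Finset.sum_range_succ, har, one_smul] at h3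
      rw [add_comm] at h3
      exact eq_neg_of_add_eq_zero_left h3
    rw [h2]
    exact neg_mem (Submodule.sum_mem _ fun j hj => Submodule.smul_mem _ _
      (Submodule.subset_span ⟨⟨j, Finset.mem_range.mp hj⟩, rfl⟩))
  have hclaim1 : ∀ j, j ≤ r → u ^ p ^ j ∈ T := by
    intro j hj
    rcases lt_or_eq_of_le hj with hlt | heq
    · exact Submodule.subset_span ⟨⟨j, hlt⟩, rfl⟩
    · rw [heq]; exact hur
  have hpow : ∀ x ∈ T, x ^ p ∈ T := by
    intro x hx
    rw [hT] at hx
    obtain ⟨c, hc⟩ := (Submodule.mem_span_range_iff_exists_fun F).mp hx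
    have hxq : x = Polynomial.aeval u (∑ i : Fin r, C (c i) * X ^ p ^ (i : ℕ)) := by
      rw [map_sum, ← hc]
      refine Finset.sum_congr rfl fun i _ => ?_
      rw [map_mul, aeval_C, map_pow, aeval_X, Algebra.smul_def, hv]
    rw [hxq, ← map_pow, sum_pow_char, map_sum]
    refine Submodule.sum_mem _ fun i _ => ?_
    have : Polynomial.aeval u ((C (c i) * X ^ p ^ (i : ℕ)) ^ p)
        = (c i ^ p) • u ^ p ^ ((i : ℕ) + 1) := by
      rw [mul_pow, ← C_pow, ← pow_mul, ← pow_succ, map_mul, aeval_C, Algebra.smul_def]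
      congr 1
      rw [map_pow, aeval_X]
    rw [this]
    exact Submodule.smul_mem _ _ (hclaim1 _ (Nat.succ_le_of_lt i.isLt))
  have hallm : ∀ m, u ^ p ^ m ∈ T := by
    intro m
    induction m with
    | zero => exact hclaim1 0 (Nat.zero_le r)
    | succ m ihm =>
      rw [pow_succ, pow_mul]
      exact hpow _ ihm
  have hspan2 : Submodule.span F (Set.range fun j : ℕ => u ^ p ^ j) = T := by
    refine le_antisymm (Submodule.span_le.mpr ?_) (Submodule.span_mono ?_)
    · rintro x ⟨m, rfl⟩
      exact hallm m
    · rintro x ⟨j, rfl⟩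
      exact ⟨(j : ℕ), rfl⟩
  have hli : LinearIndependent F v := by
    rw [Fintype.linearIndependent_iff]
    intro c hc
    by_contra hne
    push_neg at hne
    obtain ⟨i, hi⟩ := hne
    have hr1 : 1 ≤ r := i.pos
    set gg : Polynomial F := ∑ i : Fin r, C (c i) * X ^ p ^ (i : ℕ) with hgg
    set a' : ℕ → F := fun j => if h : j < r then c ⟨j, h⟩ else 0 with ha'
    have hggform : gg = ∑ j ∈ Finset.range (r - 1 + 1), C (a' j) * X ^ p ^ j := by
      rw [Nat.sub_add_cancel hr1, hgg, ← Fin.sum_univ_eq_sum_range]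
      refine Finset.sum_congr rfl fun j _ => ?_
      rw [ha']
      simp [j.isLt]
    have hcoeff : gg.coeff (p ^ (i : ℕ)) = c i := by
      rw [hgg, finset_sum_coeff]
      rw [Finset.sum_eq_single i]
      · rw [coeff_C_mul, coeff_X_pow, if_pos rfl, mul_one]
      · intro j _ hji
        rw [coeff_C_mul, coeff_X_pow, if_neg, mul_zero]
        intro hpij
        exact hji (Fin.ext (Nat.pow_right_injective hp.two_le hpij.symm))
      · intro h; exact absurd (Finset.mem_univ i) h
    have hggne : gg ≠ 0 := fun h => hi (by rw [← hcoeff, h, coeff_zero])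
    have haev : Polynomial.aeval u gg = 0 := by
      rw [hgg, map_sum, ← hc]
      refine Finset.sum_congr rfl fun j _ => ?_
      rw [map_mul, aeval_C, map_pow, aeval_X, Algebra.smul_def, hv]
    have hbound := hmini gg ⟨r - 1, a', hggform⟩ hggne haev
    have hdeg : gg.natDegree ≤ p ^ (r - 1) := by
      rw [hgg]
      refine natDegree_sum_le_of_forall_le _ _ fun j _ => ?_
      calc (C (c j) * X ^ p ^ (j : ℕ)).natDegree ≤ (X ^ p ^ (j : ℕ) : Polynomial F).natDegree :=
            natDegree_C_mul_le _ _
        _ = p ^ (j : ℕ) := natDegree_X_pow _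
        _ ≤ p ^ (r - 1) := Nat.pow_le_pow_right hp.one_lt.le (by omega)
    have : p ^ (r - 1) < p ^ r := Nat.pow_lt_pow_right hp.one_lt (by omega)
    omega
  have h5 : Module.finrank F (Submodule.span F (Set.range fun j : ℕ => u ^ p ^ j)) = r := by
    rw [hspan2, hT]
    rw [finrank_span_eq_card hli, Fintype.card_fin]
  exact ⟨h1, ⟨⟨r, a, hfa⟩, h3, hmini⟩, h5⟩
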